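/- Let $\mu$ be a Borel probability measure on $\mathbb{T}^n \times \mathbb{R}^n$ with $\int |v|\,d\mu < \infty$ satisfying the holonomy condition $\int (v \cdot D\varphi(x) - a(x)\Delta\varphi(x))\,d\mu(x,v) = 0$ for all $\varphi \in C^2(\mathbb{T}^n)$, and $\int L\,d\mu = 0$. Suppose for each $\eta > 0$ there exist $w^\eta \in C^2(\mathbb{T}^n)$ and continuous $S^\eta$ with $\|S^\eta\|_\infty \le C$, $S^\eta \to 0$ pointwise, and $H(x, Dw^\eta) \le a(x)\Delta w^\eta + S^\eta(x)$ on $\mathbb{T}^n$. Then $\mu$ minimizes $\int L\,d\mu'$ over all holonomic probability measures $\mu'$, i.e. $\int L\,d\mu' \ge 0$ for every holonomic $\mu'$ with $\int L^-\,d\mu' < \infty$. -/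

import Mathlib

open MeasureTheory Filter

noncomputable section

def ZnPeriodic {n : ℕ} {α : Type*} (f : EuclideanSpace ℝ (Fin n) → α) : Prop :=
  ∀ (x : EuclideanSpace ℝ (Fin n)) (k : Fin n → ℤ),
    f (x + (WithLp.equiv 2 (Fin n → ℝ)).symm fun i => (k i : ℝ)) = f x

def lap {n : ℕ} (f : EuclideanSpace ℝ (Fin n) → ℝ)
    (x : EuclideanSpace ℝ (Fin n)) : ℝ :=
  ∑ i : Fin n, fderiv ℝ (fun y => fderiv ℝ f y (EuclideanSpace.single i 1)) x
    (EuclideanSpace.single i 1)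

/-- A probability measure on `𝕋ⁿ × ℝⁿ` is holonomic if
`∫ (v·Dφ − aΔφ) dμ = 0` for all `φ ∈ C²(𝕋ⁿ)`. -/
def Holonomic {n : ℕ} (a : EuclideanSpace ℝ (Fin n) → ℝ)
    (μ : Measure (EuclideanSpace ℝ (Fin n) × EuclideanSpace ℝ (Fin n))) : Prop :=
  ∀ φ : EuclideanSpace ℝ (Fin n) → ℝ, ContDiff ℝ 2 φ → ZnPeriodic φ →
    ∫ q, ((inner ℝ q.2 (gradient φ q.1) : ℝ) - a q.1 * lap φ q.1) ∂μ = 0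

/-! ### Auxiliary lemmas -/

lemma fderiv_shift {n : ℕ} {F : Type*} [NormedAddCommGroup F] [NormedSpace ℝ F]
    (f : EuclideanSpace ℝ (Fin n) → F) (hf : Differentiable ℝ f)
    (c x : EuclideanSpace ℝ (Fin n)) :
    fderiv ℝ (fun y => f (y + c)) x = fderiv ℝ f (x + c) := by
  have h : HasFDerivAt (fun y => f (y + c)) (fderiv ℝ f (x + c)) x := by
    have := ((hf (x + c)).hasFDerivAt).comp x ((hasFDerivAt_id x).add_const c)
    simp at this
    exact this
  exact h.fderiv

lemma ZnPeriodic.fderiv {n : ℕ} {F : Type*} [NormedAddCommGroup F] [NormedSpace ℝ F]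
    {f : EuclideanSpace ℝ (Fin n) → F} (hf : Differentiable ℝ f) (hp : ZnPeriodic f) :
    ZnPeriodic (fderiv ℝ f) := by
  intro x k
  rw [← fderiv_shift f hf _ x]
  congr 1
  funext y
  exact hp y k

lemma znperiodic_bounded {n : ℕ} {F : Type*} [NormedAddCommGroup F]
    {f : EuclideanSpace ℝ (Fin n) → F} (hf : Continuous f) (hp : ZnPeriodic f) :
    ∃ M, ∀ x, ‖f x‖ ≤ M := by
  set K : Set (EuclideanSpace ℝ (Fin n)) :=
    (WithLp.equiv 2 (Fin n → ℝ)).symm '' (Set.univ.pi fun _ => Set.Icc (0:ℝ) 1) with hK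
  have hKc : IsCompact K :=
    (isCompact_univ_pi fun _ => isCompact_Icc).image (PiLp.continuous_toLp 2 _)
  have hb := (hKc.image hf).isBounded
  obtain ⟨M, hM⟩ := hb.exists_norm_le
  refine ⟨M, fun x => ?_⟩
  set k : Fin n → ℤ := fun i => ⌊x i⌋ with hk
  set z : EuclideanSpace ℝ (Fin n) :=
    x + (WithLp.equiv 2 (Fin n → ℝ)).symm (fun i => ((-k i : ℤ) : ℝ)) with hz
  have hzx : f x = f z := by
    have h2 := hp z k
    have hxe : x = z + (WithLp.equiv 2 (Fin n → ℝ)).symm (fun i => ((k i : ℤ) : ℝ)) := by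
      ext i
      show x i = x i + ((-k i : ℤ) : ℝ) + (k i : ℝ)
      push_cast; ring
    rw [hxe, h2]
  have hzK : z ∈ K := by
    refine ⟨fun i => x i - k i, fun i _ => ?_, ?_⟩
    · have h1 := Int.floor_le (x i)
      have h2 := Int.lt_floor_add_one (x i)
      constructor <;> simp only [hk] <;> push_cast <;> [linarith; linarith]
    · ext i
      show x i - (k i : ℝ) = z i
      show x i - (k i : ℝ) = x i + ((-k i : ℤ) : ℝ)
      push_cast; ring
  rw [hzx]
  exact hM _ ⟨z, hzK, rfl⟩

lemma gradient_periodic {n : ℕ} {f : EuclideanSpace ℝ (Fin n) → ℝ}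
    (hf : ContDiff ℝ 2 f) (hp : ZnPeriodic f) : ZnPeriodic (gradient f) := by
  intro x k
  show (InnerProductSpace.toDual ℝ _).symm _ = (InnerProductSpace.toDual ℝ _).symm _
  congr 1
  exact ZnPeriodic.fderiv (hf.differentiable (by norm_num)) hp x k

lemma gradient_continuous {n : ℕ} {f : EuclideanSpace ℝ (Fin n) → ℝ}
    (hf : ContDiff ℝ 2 f) : Continuous (gradient f) := by
  have h1 : Continuous (fderiv ℝ f) := hf.continuous_fderiv (by norm_num)
  exact (InnerProductSpace.toDual ℝ _).symm.continuous.comp h1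

lemma deriv2_aux {n : ℕ} {f : EuclideanSpace ℝ (Fin n) → ℝ}
    (hf : ContDiff ℝ 2 f) (e : EuclideanSpace ℝ (Fin n)) :
    ContDiff ℝ 1 (fun y => fderiv ℝ f y e) := by
  have h1 : ContDiff ℝ 1 (fderiv ℝ f) := hf.fderiv_right (by norm_num)
  exact (ContinuousLinearMap.apply ℝ ℝ e).contDiff.comp h1

lemma lap_periodic {n : ℕ} {f : EuclideanSpace ℝ (Fin n) → ℝ}
    (hf : ContDiff ℝ 2 f) (hp : ZnPeriodic f) : ZnPeriodic (lap f) := by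
  intro x k
  unfold lap
  refine Finset.sum_congr rfl fun i _ => ?_
  set e := EuclideanSpace.single (𝕜 := ℝ) i (1:ℝ)
  have hu : Differentiable ℝ (fun y => fderiv ℝ f y e) :=
    (deriv2_aux hf e).differentiable one_ne_zero
  have hup : ZnPeriodic (fun y => fderiv ℝ f y e) := by
    intro y k'
    show fderiv ℝ f (y + _) e = fderiv ℝ f y e
    rw [ZnPeriodic.fderiv (hf.differentiable (by norm_num)) hp y k']
  show fderiv ℝ (fun y => fderiv ℝ f y e) (x + _) e = fderiv ℝ (fun y => fderiv ℝ f y e) x e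
  rw [ZnPeriodic.fderiv hu hup x k]

lemma lap_continuous {n : ℕ} {f : EuclideanSpace ℝ (Fin n) → ℝ}
    (hf : ContDiff ℝ 2 f) : Continuous (lap f) := by
  unfold lap
  refine continuous_finset_sum _ fun i _ => ?_
  set e := EuclideanSpace.single (𝕜 := ℝ) i (1:ℝ)
  have h1 : Continuous (fderiv ℝ (fun y => fderiv ℝ f y e)) :=
    (deriv2_aux hf e).continuous_fderiv one_ne_zero
  exact (ContinuousLinearMap.apply ℝ ℝ e).continuous.comp h1

/-- a holonomic probability measure `μ` with `∫ L dμ = 0`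
minimizes the action over all holonomic probability measures, given the
approximate `C²` subsolutions `w^η` with errors `S^η → 0` pointwise and
uniformly bounded. -/
theorem mather_measure_minimizes {n : ℕ}
    (H L : EuclideanSpace ℝ (Fin n) → EuclideanSpace ℝ (Fin n) → ℝ)
    (a : EuclideanSpace ℝ (Fin n) → ℝ)
    (ha : ContDiff ℝ 2 a) (haper : ZnPeriodic a) (hapos : ∀ x, 0 ≤ a x)
    (hH : ContDiff ℝ 2 fun q : EuclideanSpace ℝ (Fin n) × EuclideanSpace ℝ (Fin n) =>
      H q.1 q.2)
    (hHper : ∀ p, ZnPeriodic fun x => H x p)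
    (hconv : ∀ x, ConvexOn ℝ Set.univ (H x))
    (hsuper : ∀ A : ℝ, ∃ R : ℝ, ∀ x p, R ≤ ‖p‖ → A * ‖p‖ ≤ H x p)
    (hleg : ∀ x v, IsLUB {r : ℝ | ∃ p, r = inner ℝ p v - H x p} (L x v))
    (μ : Measure (EuclideanSpace ℝ (Fin n) × EuclideanSpace ℝ (Fin n)))
    (hμ : IsProbabilityMeasure μ)
    (hμv : Integrable (fun q => ‖q.2‖) μ)
    (hμhol : Holonomic a μ)
    (hμL : Integrable (fun q => L q.1 q.2) μ)
    (hμL0 : ∫ q, L q.1 q.2 ∂μ = 0)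
    (W S : ℝ → EuclideanSpace ℝ (Fin n) → ℝ) (C : ℝ)
    (hW : ∀ η : ℝ, 0 < η → ContDiff ℝ 2 (W η) ∧ ZnPeriodic (W η))
    (hS : ∀ η : ℝ, 0 < η → Continuous (S η) ∧ ZnPeriodic (S η) ∧ ∀ x, |S η x| ≤ C)
    (hS0 : ∀ x, Tendsto (fun η => S η x) (nhdsWithin 0 (Set.Ioi 0)) (nhds 0))
    (hsub : ∀ η : ℝ, 0 < η → ∀ x,
      H x (gradient (W η) x) ≤ a x * lap (W η) x + S η x) :
    ∀ μ' : Measure (EuclideanSpace ℝ (Fin n) × EuclideanSpace ℝ (Fin n)),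
      IsProbabilityMeasure μ' → Integrable (fun q => ‖q.2‖) μ' →
      Holonomic a μ' → Integrable (fun q => L q.1 q.2) μ' →
      0 ≤ ∫ q, L q.1 q.2 ∂μ' := by
  intro μ' hμ' hμ'v hμ'hol hμ'L
  have key : ∀ η : ℝ, 0 < η → -(∫ q, S η q.1 ∂μ') ≤ ∫ q, L q.1 q.2 ∂μ' := by
    intro η hη
    obtain ⟨hWc, hWp⟩ := hW η hη
    obtain ⟨hSc, hSp, hSb⟩ := hS η hη
    set g : EuclideanSpace ℝ (Fin n) × EuclideanSpace ℝ (Fin n) → ℝ :=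
      fun q => (inner ℝ q.2 (gradient (W η) q.1) : ℝ) - a q.1 * lap (W η) q.1 with hg
    obtain ⟨M1, hM1⟩ := znperiodic_bounded (gradient_continuous hWc)
      (gradient_periodic hWc hWp)
    have haLc : Continuous (fun x => a x * lap (W η) x) :=
      ha.continuous.mul (lap_continuous hWc)
    have haLp : ZnPeriodic (fun x => a x * lap (W η) x) := by
      intro x k; simp only [haper x k, lap_periodic hWc hWp x k]
    obtain ⟨M2, hM2⟩ := znperiodic_bounded haLc haLp
    have hgc : Continuous g := by
      apply Continuous.sub
      · exact continuous_inner.comp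
          (continuous_snd.prodMk ((gradient_continuous hWc).comp continuous_fst))
      · exact haLc.comp continuous_fst
    have hgint : Integrable g μ' := by
      refine Integrable.mono' (g := fun q => M1 * ‖q.2‖ + M2)
        ((hμ'v.const_mul M1).add (integrable_const M2)) hgc.aestronglyMeasurable ?_
      filter_upwards with q
      have h1 : ‖(inner ℝ q.2 (gradient (W η) q.1) : ℝ)‖ ≤ M1 * ‖q.2‖ := by
        calc ‖(inner ℝ q.2 (gradient (W η) q.1) : ℝ)‖
            ≤ ‖q.2‖ * ‖gradient (W η) q.1‖ := norm_inner_le_norm _ _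
          _ ≤ ‖q.2‖ * M1 := by
              have := hM1 q.1
              exact mul_le_mul_of_nonneg_left this (norm_nonneg _)
          _ = M1 * ‖q.2‖ := mul_comm _ _
      have h2 : ‖a q.1 * lap (W η) q.1‖ ≤ M2 := hM2 q.1
      calc ‖g q‖ ≤ ‖(inner ℝ q.2 (gradient (W η) q.1) : ℝ)‖ + ‖a q.1 * lap (W η) q.1‖ :=
            norm_sub_le _ _
        _ ≤ M1 * ‖q.2‖ + M2 := add_le_add h1 h2
    have hSint : Integrable (fun q => S η q.1) μ' := by
      refine Integrable.mono' (integrable_const C)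
        ((hSc.comp continuous_fst).aestronglyMeasurable) ?_
      filter_upwards with q
      simpa [Real.norm_eq_abs] using hSb q.1
    have hptw : ∀ q : EuclideanSpace ℝ (Fin n) × EuclideanSpace ℝ (Fin n),
        g q - S η q.1 ≤ L q.1 q.2 := by
      intro q
      have hmem : (inner ℝ (gradient (W η) q.1) q.2 : ℝ) - H q.1 (gradient (W η) q.1) ∈
          {r : ℝ | ∃ p, r = inner ℝ p q.2 - H q.1 p} := ⟨_, rfl⟩
      have h1 := (hleg q.1 q.2).1 hmem
      have h2 := hsub η hη q.1
      have h3 : (inner ℝ q.2 (gradient (W η) q.1) : ℝ) =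
          (inner ℝ (gradient (W η) q.1) q.2 : ℝ) := real_inner_comm _ _
      simp only [hg, h3]
      linarith
    have hmono : ∫ q, (g q - S η q.1) ∂μ' ≤ ∫ q, L q.1 q.2 ∂μ' :=
      integral_mono (hgint.sub hSint) hμ'L hptw
    rw [integral_sub hgint hSint, hμ'hol (W η) hWc hWp] at hmono
    linarith
  have htend : Tendsto (fun η => ∫ q, S η q.1 ∂μ') (nhdsWithin 0 (Set.Ioi 0)) (nhds 0) := by
    have h := tendsto_integral_filter_of_dominated_convergence (μ := μ') (l := nhdsWithin (0:ℝ) (Set.Ioi 0))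
      (F := fun η (q : EuclideanSpace ℝ (Fin n) × EuclideanSpace ℝ (Fin n)) => S η q.1)
      (f := fun _ => (0:ℝ)) (bound := fun _ => C)
      (by filter_upwards [self_mem_nhdsWithin] with η hη
          exact (((hS η hη).1.comp continuous_fst).aestronglyMeasurable))
      (by filter_upwards [self_mem_nhdsWithin] with η hη
          filter_upwards with q
          simpa [Real.norm_eq_abs] using (hS η hη).2.2 q.1)
      (integrable_const C)
      (by filter_upwards with q; exact hS0 q.1)
    simpa using h
  have hev : ∀ᶠ η in nhdsWithin (0:ℝ) (Set.Ioi 0),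
      -(∫ q, S η q.1 ∂μ') ≤ ∫ q, L q.1 q.2 ∂μ' := by
    filter_upwards [self_mem_nhdsWithin] with η hη
    exact key η hη
  have hneg : Tendsto (fun η => -(∫ q, S η q.1 ∂μ')) (nhdsWithin 0 (Set.Ioi 0)) (nhds 0) := by
    simpa using htend.neg
  exact le_of_tendsto hneg hev

end
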